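/- Let g, r, d be positive integers with d ≤ 3r(g-1)/(2r+2). If integers k, s satisfy 1 ≤ s and (r-1)/(r+1) ≤ k/s < r/(r+1) and (k/s - (r-1)/(r+1))² · (2g-2) ≥ (8r(g-1) - 4d(r+1))/(r(r+1)²), then we reach a contradiction; i.e., no such k, s exist. -/

import Mathlib

/-- Step 1 numerical core: no destabilizing data (k, s) can satisfy both the
slope constraints and the Bogomolov-type inequality when d ≤ 3r(g-1)/(2r+2). -/
theorem stmt_0 (g r d k s : ℤ) (hg : 2 ≤ g) (hr : 1 ≤ r) (hd : 1 ≤ d)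
    (hdle : (d : ℚ) ≤ 3 * r * (g - 1) / (2 * r + 2))
    (hs : 1 ≤ s)
    (h1 : ((r : ℚ) - 1) / (r + 1) ≤ (k : ℚ) / s)
    (h2 : (k : ℚ) / s < (r : ℚ) / (r + 1))
    (h3 : ((k : ℚ) / s - ((r : ℚ) - 1) / (r + 1)) ^ 2 * (2 * g - 2) ≥
      (8 * r * (g - 1) - 4 * d * (r + 1)) / (r * (r + 1) ^ 2)) :
    False := by
  have hrQ : (1 : ℚ) ≤ (r : ℚ) := by exact_mod_cast hr
  have hgQ : (2 : ℚ) ≤ (g : ℚ) := by exact_mod_cast hg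
  have hr1 : (0 : ℚ) < (r : ℚ) + 1 := by linarith
  have hrpos : (0 : ℚ) < (r : ℚ) := by linarith
  have hg1 : (0 : ℚ) < (g : ℚ) - 1 := by linarith
  set x : ℚ := (k : ℚ) / s - ((r : ℚ) - 1) / (r + 1) with hxdef
  have hx0 : 0 ≤ x := by simp [hxdef]; linarith
  have hx1 : x < 1 / ((r : ℚ) + 1) := by
    have : (r : ℚ) / (r + 1) - ((r : ℚ) - 1) / (r + 1) = 1 / ((r : ℚ) + 1) := by
      field_simp
      ring
    simp only [hxdef]
    linarith [h2]
  -- from hdle : 4d(r+1) ≤ 6r(g-1)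
  have hd2 : 4 * (d : ℚ) * (r + 1) ≤ 6 * r * ((g : ℚ) - 1) := by
    have := (le_div_iff₀ (by linarith : (0:ℚ) < 2 * (r:ℚ) + 2)).mp hdle
    nlinarith [this]
  -- h3 gives x^2 * (2g-2) ≥ 2(g-1)/(r+1)^2
  have hden : (0 : ℚ) < (r : ℚ) * ((r : ℚ) + 1) ^ 2 := by positivity
  have h3' : x ^ 2 * (2 * (g : ℚ) - 2) * ((r : ℚ) * ((r : ℚ) + 1) ^ 2) ≥
      8 * r * ((g : ℚ) - 1) - 4 * d * (r + 1) := by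
    have := (div_le_iff₀ hden).mp h3
    linarith
  have hx1' : x * ((r : ℚ) + 1) < 1 := (lt_div_iff₀ hr1).mp hx1
  have hxsq : x ^ 2 * ((r : ℚ) + 1) ^ 2 < 1 := by
    nlinarith [mul_nonneg hx0 hr1.le, hx1']
  nlinarith [h3', hd2, hxsq, hg1, hrpos, mul_pos hg1 hrpos]
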